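/- For every n ≥ 1, the volume V_n = ∫_0^1 ∫_0^{1-y_1} ⋯ ∫_0^{1-y_{n-1}} dy_1⋯dy_n equals A_n/n!, where A_n is Euler's n-th zigzag number. -/

import Mathlib

open MeasureTheory

/-- Euler zigzag numbers, as the Taylor coefficients at `0` of `sec z + tan z`. -/
noncomputable def zigzag (n : ℕ) : ℝ :=
  iteratedDeriv n (fun z : ℝ => (1 + Real.sin z) / Real.cos z) 0

/-- `volRec n x = ∫_0^{1-x} ∫_0^{1-y₁} ⋯ ∫_0^{1-y_{n-1}} dy₁ ⋯ dy_n`, so that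
`volRec n 0` is the iterated integral `∫_0^1 ∫_0^{1-y₁} ⋯ ∫_0^{1-y_{n-1}} dy₁⋯dy_n`. -/
noncomputable def volRec : ℕ → ℝ → ℝ
  | 0, _ => 1
  | n + 1, x => ∫ t in (0 : ℝ)..(1 - x), volRec n t

open Finset Topology Filter

/-! ### Auxiliary sequences -/

noncomputable def aZ (m : ℕ) : ℝ := zigzag m / m.factorial
noncomputable def ccC (j : ℕ) : ℝ := iteratedDeriv j Real.cos 0 / j.factorial
noncomputable def ssC (j : ℕ) : ℝ := iteratedDeriv j Real.sin 0 / j.factorial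

noncomputable def pp (n : ℕ) (x : ℝ) : ℝ :=
  (∑ j ∈ range (n+1), aZ (n-j) * ccC j * x^j) - ssC n * x^n

noncomputable def qq (n : ℕ) (u : ℝ) : ℝ :=
  ccC n * u^n + ∑ j ∈ range (n+1), aZ (n-j) * ssC j * u^j

lemma ccC_zero : ccC 0 = 1 := by simp [ccC]

lemma ssC_zero : ssC 0 = 0 := by simp [ssC]

lemma ssC_succ (j : ℕ) : ssC (j+1) * (j+1) = ccC j := by
  have h1 : iteratedDeriv (j+1) Real.sin 0 = iteratedDeriv j Real.cos 0 := by
    rw [iteratedDeriv_succ', Real.deriv_sin]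
  have h2 : ((j+1).factorial : ℝ) = (j+1) * j.factorial := by
    rw [Nat.factorial_succ]; push_cast; ring
  rw [ssC, ccC, h1, h2]
  have hj : ((j:ℝ)+1) ≠ 0 := by positivity
  have hf : (j.factorial : ℝ) ≠ 0 := by
    exact_mod_cast j.factorial_ne_zero
  field_simp

lemma ccC_succ (j : ℕ) : ccC (j+1) * (j+1) = -ssC j := by
  have h1 : iteratedDeriv (j+1) Real.cos 0 = -iteratedDeriv j Real.sin 0 := by
    rw [iteratedDeriv_succ', Real.deriv_cos']
    exact iteratedDeriv_neg j Real.sin 0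
  have h2 : ((j+1).factorial : ℝ) = (j+1) * j.factorial := by
    rw [Nat.factorial_succ]; push_cast; ring
  rw [ssC, ccC, h1, h2]
  have hj : ((j:ℝ)+1) ≠ 0 := by positivity
  have hf : (j.factorial : ℝ) ≠ 0 := by
    exact_mod_cast j.factorial_ne_zero
  field_simp

/-! ### A local Leibniz rule for iterated derivatives -/

lemma iteratedDerivWithin_of_isOpen' {s : Set ℝ} (hs : IsOpen s) {x : ℝ} (hx : x ∈ s)
    (n : ℕ) (f : ℝ → ℝ) : iteratedDerivWithin n f s x = iteratedDeriv n f x := by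
  rw [iteratedDerivWithin_eq_iteratedFDerivWithin, iteratedDeriv_eq_iteratedFDeriv,
    iteratedFDerivWithin_of_isOpen n hs hx]

lemma iteratedDeriv_add_of_isOpen {s : Set ℝ} (hs : IsOpen s) {x : ℝ} (hx : x ∈ s)
    (n : ℕ) {f g : ℝ → ℝ} (hf : ContDiffOn ℝ (⊤:ℕ∞) f s) (hg : ContDiffOn ℝ (⊤:ℕ∞) g s) :
    iteratedDeriv n (fun y => f y + g y) x = iteratedDeriv n f x + iteratedDeriv n g x := by
  rw [← iteratedDerivWithin_of_isOpen' hs hx n, ← iteratedDerivWithin_of_isOpen' hs hx n f,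
    ← iteratedDerivWithin_of_isOpen' hs hx n g]
  exact iteratedDerivWithin_add hx hs.uniqueDiffOn
    ((hf.contDiffWithinAt hx).of_le (by exact_mod_cast (le_top : (n:ℕ∞) ≤ ⊤)))
    ((hg.contDiffWithinAt hx).of_le (by exact_mod_cast (le_top : (n:ℕ∞) ≤ ⊤)))

lemma choose_conv (a b : ℕ → ℝ) (n : ℕ) :
    (∑ k ∈ range (n+1), (n.choose k : ℝ) * a (k+1) * b (n-k))
      + ∑ k ∈ range (n+1), (n.choose k : ℝ) * a k * b (n-k+1)
    = ∑ k ∈ range (n+2), ((n+1).choose k : ℝ) * a k * b (n+1-k) := by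
  rw [Finset.sum_range_succ' (fun k => ((n+1).choose k : ℝ) * a k * b (n+1-k)) (n+1)]
  rw [Finset.sum_range_succ' (fun k => (n.choose k : ℝ) * a k * b (n-k+1)) n]
  have h2 : ∑ k ∈ range n, ((n.choose (k+1) : ℝ)) * a (k+1) * b (n-(k+1)+1)
      = ∑ k ∈ range (n+1), ((n.choose (k+1) : ℝ)) * a (k+1) * b (n-k) := by
    rw [Finset.sum_range_succ]
    have : (n.choose (n+1) : ℝ) = 0 := by
      simp [Nat.choose_eq_zero_of_lt]
    rw [this]
    simp only [zero_mul, add_zero]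
    apply Finset.sum_congr rfl
    intro k hk
    have hk' : k < n := Finset.mem_range.mp hk
    congr 2
    omega
  rw [h2]
  have hc : (n.choose 0 : ℝ) * a 0 * b (n-0+1) = ((n+1).choose 0 : ℝ) * a 0 * b (n+1-0) := by
    simp
  rw [hc, ← add_assoc, ← Finset.sum_add_distrib]
  congr 1
  apply Finset.sum_congr rfl
  intro k hk
  have hk' : k ≤ n := Nat.lt_succ_iff.mp (Finset.mem_range.mp hk)
  have hch : ((n+1).choose (k+1) : ℝ) = (n.choose k : ℝ) + (n.choose (k+1) : ℝ) := by
    rw [← Nat.cast_add, Nat.choose_succ_succ]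
  have hsub : n + 1 - (k+1) = n - k := by omega
  rw [hsub, hch]
  ring

lemma leibniz_of_isOpen {s : Set ℝ} (hs : IsOpen s) :
    ∀ (n : ℕ) (f g : ℝ → ℝ), ContDiffOn ℝ (⊤:ℕ∞) f s → ContDiffOn ℝ (⊤:ℕ∞) g s →
      ∀ x ∈ s, iteratedDeriv n (fun y => f y * g y) x
        = ∑ k ∈ range (n+1), (n.choose k : ℝ) * iteratedDeriv k f x * iteratedDeriv (n-k) g x := by
  intro n
  induction n with
  | zero => intro f g hf hg x hx; simp
  | succ n IH =>
    intro f g hf hg x hx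
    have hone : (1 : WithTop ℕ∞) ≤ (⊤:ℕ∞) := by exact_mod_cast le_top
    have hinf : ((⊤:ℕ∞) : WithTop ℕ∞) + 1 ≤ ((⊤:ℕ∞) : WithTop ℕ∞) := by
      norm_num
    have hf' : ContDiffOn ℝ (⊤:ℕ∞) (deriv f) s := hf.deriv_of_isOpen hs hinf
    have hg' : ContDiffOn ℝ (⊤:ℕ∞) (deriv g) s := hg.deriv_of_isOpen hs hinf
    rw [iteratedDeriv_succ']
    have heq : deriv (fun y => f y * g y) =ᶠ[𝓝 x]
        fun y => deriv f y * g y + f y * deriv g y := by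
      filter_upwards [hs.mem_nhds hx] with y hy
      exact deriv_fun_mul ((hf.contDiffAt (hs.mem_nhds hy)).differentiableAt (by simp))
        ((hg.contDiffAt (hs.mem_nhds hy)).differentiableAt (by simp))
    rw [heq.iteratedDeriv_eq n]
    rw [iteratedDeriv_add_of_isOpen hs hx n (hf'.mul hg) (hf.mul hg')]
    rw [IH (deriv f) g hf' hg x hx, IH f (deriv g) hf hg' x hx]
    have e1 : ∀ k, iteratedDeriv k (deriv f) x = iteratedDeriv (k+1) f x := by
      intro k; rw [iteratedDeriv_succ']
    have e2 : ∀ k, iteratedDeriv k (deriv g) x = iteratedDeriv (k+1) g x := by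
      intro k; rw [iteratedDeriv_succ']
    simp only [e1, e2]
    have := choose_conv (fun k => iteratedDeriv k f x) (fun k => iteratedDeriv k g x) n
    simpa using this

/-! ### The key zigzag identity -/

lemma zigzag_identity (n : ℕ) (hn : 1 ≤ n) :
    ∑ k ∈ range (n+1), (n.choose k : ℝ) * zigzag k * iteratedDeriv (n-k) Real.cos 0
      = iteratedDeriv n Real.sin 0 := by
  set S : Set ℝ := {x | Real.cos x ≠ 0} with hSdef
  have hS : IsOpen S := isOpen_compl_singleton.preimage Real.continuous_cos
  have h0 : (0:ℝ) ∈ S := by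
    simp [hSdef, Real.cos_zero]
  have hh : ContDiffOn ℝ (⊤:ℕ∞) (fun z : ℝ => (1 + Real.sin z) / Real.cos z) S :=
    ContDiffOn.div ((contDiff_const.add Real.contDiff_sin).contDiffOn)
      (Real.contDiff_cos.contDiffOn) (fun x hx => hx)
  have hcos : ContDiffOn ℝ (⊤:ℕ∞) Real.cos S := Real.contDiff_cos.contDiffOn
  have key := leibniz_of_isOpen hS n (fun z : ℝ => (1 + Real.sin z) / Real.cos z)
    Real.cos hh hcos 0 h0
  have heq : (fun y => (1 + Real.sin y) / Real.cos y * Real.cos y) =ᶠ[𝓝 (0:ℝ)]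
      fun y => 1 + Real.sin y := by
    filter_upwards [hS.mem_nhds h0] with y hy
    exact div_mul_cancel₀ _ hy
  have hL : iteratedDeriv n (fun y => (1 + Real.sin y) / Real.cos y * Real.cos y) 0
      = iteratedDeriv n (fun y => 1 + Real.sin y) 0 := heq.iteratedDeriv_eq n
  obtain ⟨m, rfl⟩ : ∃ m, n = m + 1 := ⟨n - 1, by omega⟩
  have hd : deriv (fun y : ℝ => 1 + Real.sin y) = Real.cos := by
    funext y
    rw [deriv_const_add, Real.deriv_sin]
  have hR : iteratedDeriv (m+1) (fun y : ℝ => 1 + Real.sin y) 0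
      = iteratedDeriv (m+1) Real.sin 0 := by
    rw [iteratedDeriv_succ', hd, iteratedDeriv_succ', Real.deriv_sin]
  calc ∑ k ∈ range (m+1+1), ((m+1).choose k : ℝ) * zigzag k * iteratedDeriv (m+1-k) Real.cos 0
      = iteratedDeriv (m+1) (fun y => (1 + Real.sin y) / Real.cos y * Real.cos y) 0 := by
        rw [key]; rfl
    _ = iteratedDeriv (m+1) Real.sin 0 := by rw [hL, hR]

lemma sum_aZ_ccC (n : ℕ) (hn : 1 ≤ n) :
    ∑ j ∈ range (n+1), aZ (n-j) * ccC j = ssC n := by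
  have key := zigzag_identity n hn
  have h1 : ∑ j ∈ range (n+1), (n.choose j : ℝ) * zigzag (n-j) * iteratedDeriv j Real.cos 0
      = iteratedDeriv n Real.sin 0 := by
    rw [← key, ← Finset.sum_range_reflect]
    apply Finset.sum_congr rfl
    intro j hj
    have hj' : j ≤ n := Nat.lt_succ_iff.mp (Finset.mem_range.mp hj)
    have e1 : n + 1 - 1 - j = n - j := by omega
    have e2 : n - (n - j) = j := by omega
    rw [e1, e2, Nat.choose_symm hj']
  have h2 : ∀ j ∈ range (n+1), aZ (n-j) * ccC j
      = (n.choose j : ℝ) * zigzag (n-j) * iteratedDeriv j Real.cos 0 / n.factorial := by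
    intro j hj
    have hj' : j ≤ n := Nat.lt_succ_iff.mp (Finset.mem_range.mp hj)
    have hfac : (n.factorial : ℝ) = (n.choose j) * (j.factorial) * ((n-j).factorial) := by
      exact_mod_cast (Nat.choose_mul_factorial_mul_factorial hj').symm
    have hne1 : ((n-j).factorial : ℝ) ≠ 0 := by exact_mod_cast (n-j).factorial_ne_zero
    have hne2 : (j.factorial : ℝ) ≠ 0 := by exact_mod_cast j.factorial_ne_zero
    have hne3 : (n.choose j : ℝ) ≠ 0 := by
      exact_mod_cast (Nat.choose_pos hj').ne'
    rw [aZ, ccC, hfac]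
    field_simp
  rw [Finset.sum_congr rfl h2, ← Finset.sum_div, h1, ssC]

lemma pp_one (n : ℕ) (hn : 1 ≤ n) : pp n 1 = 0 := by
  simp only [pp, one_pow, mul_one]
  rw [sum_aZ_ccC n hn, sub_self]

/-! ### Derivative relations between `pp` and `qq` -/

lemma pp_zero_eval (x : ℝ) : pp 0 x = 1 := by
  have hz : zigzag 0 = 1 := by
    simp [zigzag, iteratedDeriv_zero]
  simp [pp, aZ, ccC_zero, ssC_zero, hz]

lemma qq_zero_eval (u : ℝ) : qq 0 u = 1 := by
  have hz : zigzag 0 = 1 := by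
    simp [zigzag, iteratedDeriv_zero]
  simp [qq, aZ, ccC_zero, ssC_zero, hz]

lemma qq_at_zero (n : ℕ) (hn : 1 ≤ n) : qq n 0 = 0 := by
  obtain ⟨m, rfl⟩ : ∃ m, n = m + 1 := ⟨n - 1, by omega⟩
  simp only [qq]
  rw [Finset.sum_eq_single 0]
  · simp [ssC_zero]
  · intro j hj hj0
    simp [zero_pow hj0]
  · intro h; simp at h

lemma pp_hasDeriv (n : ℕ) (x : ℝ) : HasDerivAt (pp (n+1)) (-(qq n x)) x := by
  have h1 : HasDerivAt (fun x : ℝ =>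
      (∑ j ∈ range (n+2), aZ (n+1-j) * ccC j * x^j) - ssC (n+1) * x^(n+1))
      ((∑ j ∈ range (n+2), aZ (n+1-j) * ccC j * (j * x^(j-1)))
        - ssC (n+1) * ((n+1) * x^n)) x := by
    apply HasDerivAt.sub
    · exact HasDerivAt.fun_sum fun j _ => (hasDerivAt_pow j x).const_mul _
    · simpa using (hasDerivAt_pow (n+1) x).const_mul (ssC (n+1))
  have h2 : (∑ j ∈ range (n+2), aZ (n+1-j) * ccC j * (j * x^(j-1)))
      - ssC (n+1) * ((n+1) * x^n) = -(qq n x) := by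
    rw [Finset.sum_range_succ' (fun j => aZ (n+1-j) * ccC j * (j * x^(j-1))) (n+1)]
    simp only [Nat.cast_zero, zero_mul, mul_zero, add_zero]
    have hterm : ∀ j ∈ range (n+1), aZ (n+1-(j+1)) * ccC (j+1) * ((j+1 : ℕ) * x^(j+1-1))
        = -(aZ (n-j) * ssC j * x^j) := by
      intro j hj
      have e1 : n + 1 - (j+1) = n - j := by omega
      have e2 : j + 1 - 1 = j := by omega
      rw [e1, e2]
      have := ccC_succ j
      push_cast
      calc aZ (n-j) * ccC (j+1) * (((j:ℝ)+1) * x^j)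
          = aZ (n-j) * (ccC (j+1) * ((j:ℝ)+1)) * x^j := by ring
        _ = aZ (n-j) * (-ssC j) * x^j := by rw [this]
        _ = -(aZ (n-j) * ssC j * x^j) := by ring
    rw [Finset.sum_congr rfl hterm]
    have hcc : ssC (n+1) * (((n:ℕ)+1 : ℝ) * x^n) = ccC n * x^n := by
      have := ssC_succ n
      calc ssC (n+1) * (((n:ℕ)+1 : ℝ) * x^n) = (ssC (n+1) * ((n:ℝ)+1)) * x^n := by
            ring
        _ = ccC n * x^n := by rw [this]
    push_cast at hcc ⊢
    rw [hcc]
    rw [Finset.sum_neg_distrib]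
    simp only [qq]
    ring
  have h3 : pp (n+1) = fun x : ℝ =>
      (∑ j ∈ range (n+2), aZ (n+1-j) * ccC j * x^j) - ssC (n+1) * x^(n+1) := by
    funext y; rfl
  rw [h3, ← h2]
  exact h1

lemma qq_hasDeriv (n : ℕ) (u : ℝ) : HasDerivAt (qq (n+1)) (pp n u) u := by
  have h1 : HasDerivAt (fun u : ℝ =>
      ccC (n+1) * u^(n+1) + ∑ j ∈ range (n+2), aZ (n+1-j) * ssC j * u^j)
      (ccC (n+1) * ((n+1) * u^n)
        + ∑ j ∈ range (n+2), aZ (n+1-j) * ssC j * (j * u^(j-1))) u := by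
    apply HasDerivAt.add
    · simpa using (hasDerivAt_pow (n+1) u).const_mul (ccC (n+1))
    · exact HasDerivAt.fun_sum fun j _ => (hasDerivAt_pow j u).const_mul _
  have h2 : ccC (n+1) * ((n+1 : ℕ) * u^n)
      + ∑ j ∈ range (n+2), aZ (n+1-j) * ssC j * (j * u^(j-1)) = pp n u := by
    rw [Finset.sum_range_succ' (fun j => aZ (n+1-j) * ssC j * (j * u^(j-1))) (n+1)]
    simp only [Nat.cast_zero, zero_mul, mul_zero, add_zero]
    have hterm : ∀ j ∈ range (n+1), aZ (n+1-(j+1)) * ssC (j+1) * ((j+1 : ℕ) * u^(j+1-1))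
        = aZ (n-j) * ccC j * u^j := by
      intro j hj
      have e1 : n + 1 - (j+1) = n - j := by omega
      have e2 : j + 1 - 1 = j := by omega
      rw [e1, e2]
      have := ssC_succ j
      push_cast
      calc aZ (n-j) * ssC (j+1) * (((j:ℝ)+1) * u^j)
          = aZ (n-j) * (ssC (j+1) * ((j:ℝ)+1)) * u^j := by ring
        _ = aZ (n-j) * ccC j * u^j := by rw [this]
    rw [Finset.sum_congr rfl hterm]
    have hcc : ccC (n+1) * (((n:ℕ)+1 : ℝ) * u^n) = -ssC n * u^n := by
      have := ccC_succ n
      calc ccC (n+1) * (((n:ℕ)+1 : ℝ) * u^n) = (ccC (n+1) * ((n:ℝ)+1)) * u^n := by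
            ring
        _ = -ssC n * u^n := by rw [this]
    push_cast at hcc ⊢
    rw [hcc]
    simp only [pp]
    ring
  have h3 : qq (n+1) = fun u : ℝ =>
      ccC (n+1) * u^(n+1) + ∑ j ∈ range (n+2), aZ (n+1-j) * ssC j * u^j := by
    funext y; rfl
  rw [h3, ← h2]
  push_cast
  exact h1

lemma pp_continuous (n : ℕ) : Continuous (pp n) := by
  have : Continuous fun x : ℝ =>
      (∑ j ∈ range (n+1), aZ (n-j) * ccC j * x^j) - ssC n * x^n :=
    (continuous_finset_sum _ fun j _ => (continuous_const.mul (continuous_pow j))).sub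
      (continuous_const.mul (continuous_pow n))
  exact this

/-! ### The main induction -/

lemma volRec_eq (n : ℕ) :
    (∀ x : ℝ, volRec n x = qq n (1-x)) ∧ (∀ x : ℝ, qq n (1-x) = pp n x) := by
  induction n with
  | zero =>
    constructor
    · intro x; rw [qq_zero_eval]; rfl
    · intro x; rw [qq_zero_eval, pp_zero_eval]
  | succ n IH =>
    obtain ⟨IH1, IH2⟩ := IH
    have hpq : ∀ x : ℝ, qq (n+1) (1-x) = pp (n+1) x := by
      have hdiff : Differentiable ℝ (fun x : ℝ => qq (n+1) (1-x) - pp (n+1) x) := by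
        intro x
        exact (((qq_hasDeriv n (1-x)).comp x
          ((hasDerivAt_const x (1:ℝ)).sub (hasDerivAt_id x))).sub (pp_hasDeriv n x)).differentiableAt
      have hderiv : ∀ x : ℝ, deriv (fun x : ℝ => qq (n+1) (1-x) - pp (n+1) x) x = 0 := by
        intro x
        have hq : HasDerivAt (fun x : ℝ => qq (n+1) (1-x)) (pp n (1-x) * (0 - 1)) x :=
          (qq_hasDeriv n (1-x)).comp x ((hasDerivAt_const x (1:ℝ)).sub (hasDerivAt_id x))
        have h : HasDerivAt (fun x : ℝ => qq (n+1) (1-x) - pp (n+1) x)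
            (pp n (1-x) * (0 - 1) - -(qq n x)) x := hq.sub (pp_hasDeriv n x)
        rw [h.deriv]
        have : qq n x = pp n (1-x) := by
          have := IH2 (1-x)
          rwa [show (1:ℝ) - (1-x) = x by ring] at this
        rw [← this]
        ring
      have hconst := is_const_of_deriv_eq_zero hdiff hderiv
      intro x
      have := hconst x 1
      have h1 : qq (n+1) ((1:ℝ)-1) - pp (n+1) 1 = 0 := by
        rw [show (1:ℝ)-1 = 0 by ring, qq_at_zero (n+1) (by omega),
          pp_one (n+1) (by omega), sub_zero]
      rw [h1] at this
      linarith [this]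
    constructor
    · intro x
      have hint : ∀ t : ℝ, volRec n t = pp n t := fun t => (IH1 t).trans (IH2 t)
      show (∫ t in (0:ℝ)..(1-x), volRec n t) = qq (n+1) (1-x)
      rw [intervalIntegral.integral_congr (g := pp n) (fun t _ => hint t)]
      rw [intervalIntegral.integral_eq_sub_of_hasDerivAt
        (fun t _ => qq_hasDeriv n t) ((pp_continuous n).intervalIntegrable _ _)]
      rw [qq_at_zero (n+1) (by omega), sub_zero]
    · exact hpq

theorem zigzag_volume (n : ℕ) (hn : 1 ≤ n) :
    volRec n 0 = zigzag n / n.factorial := by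
  obtain ⟨IH1, IH2⟩ := volRec_eq n
  have h1 : volRec n 0 = pp n 0 := by
    rw [IH1 0, show (1:ℝ) - 0 = 1 by ring, ← IH2 0, show (1:ℝ) - 0 = 1 by ring]
  rw [h1]
  obtain ⟨m, rfl⟩ : ∃ m, n = m + 1 := ⟨n - 1, by omega⟩
  simp only [pp]
  rw [Finset.sum_eq_single 0]
  · simp [ccC_zero, aZ, ssC]
  · intro j hj hj0
    simp [zero_pow hj0]
  · intro h; simp at h
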